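/- Let m ≥ 4 be even and set μ_i = (1, m-2)·π^i and π_j = π^j where π = (0,1,…,m-1) is the m-cycle on ℤ_m (composition left-to-right). Then the permutation μ_0 · π_2 = (1, m-2)·π^2 is a single m-cycle, namely (0, 2, 4, …, m-2, 3, 5, 7, …, m-1, 1). -/
import Mathlib


/-- Let `m ≥ 4` be even and `π = (0,1,…,m-1)` the cyclic shift on
`ℤ_m`.  The permutation `μ₀·π₂ = (1, m-2)·π²` (transposition first, then `π²`,
composition left-to-right) is a single `m`-cycle. -/
theorem swap_mul_shift_sq_isCycle (m : ℕ) (hm : 4 ≤ m) (heven : Even m)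
    (π : Equiv.Perm (Fin m)) (hπ : ∀ x : Fin m, (π x).val = (x.val + 1) % m) :
    Equiv.Perm.IsCycle
      ((Equiv.swap (⟨1, by omega⟩ : Fin m) ⟨m - 2, by omega⟩).trans (π ^ 2)) ∧
    Equiv.Perm.support
      ((Equiv.swap (⟨1, by omega⟩ : Fin m) ⟨m - 2, by omega⟩).trans (π ^ 2)) =
      Finset.univ := by
  have h2m : m % 2 = 0 := Nat.even_iff.mp heven
  set a : Fin m := ⟨1, by omega⟩ with ha
  set b : Fin m := ⟨m - 2, by omega⟩ with hb
  set σ : Equiv.Perm (Fin m) := (Equiv.swap a b).trans (π ^ 2) with hσdef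
  have hπ2 : ∀ x : Fin m, ((π ^ 2) x).val = (x.val + 2) % m := by
    intro x
    have h1 : (π ^ 2) x = π (π x) := by rw [pow_two]; rfl
    rw [h1, hπ, hπ, Nat.mod_add_mod]
  have hστ : ∀ x : Fin m, (σ x).val =
      ((if x.val = 1 then m - 2 else if x.val = m - 2 then 1 else x.val) + 2) % m := by
    intro x
    simp only [hσdef, Equiv.trans_apply]
    rw [hπ2]
    congr 1
    by_cases h1 : x = a
    · rw [h1, Equiv.swap_apply_left]
      simp [ha, hb]
    · by_cases h2 : x = b
      · rw [h2, Equiv.swap_apply_right]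
        simp only [ha, hb]
        rw [if_neg (by omega : ¬ (m - 2 = 1))]
        simp
      · have hv1 : ¬ (x.val = 1) := fun h => h1 (Fin.ext (by simpa [ha] using h))
        have hv2 : ¬ (x.val = m - 2) := fun h => h2 (Fin.ext (by simpa [hb] using h))
        rw [Equiv.swap_apply_of_ne_of_ne h1 h2, if_neg hv1, if_neg hv2]
  have hmod : ∀ v, v < m → (v + 2) % m = if v + 2 < m then v + 2 else v + 2 - m := by
    intro v hv
    split_ifs with h
    · exact Nat.mod_eq_of_lt h
    · rw [Nat.mod_eq_sub_mod (by omega), Nat.mod_eq_of_lt (by omega)]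
  set z : Fin m := ⟨0, by omega⟩ with hz
  have orbit : ∀ k, k < m → ((σ ^ k) z).val =
      (if k < m / 2 then 2 * k else if k < m - 1 then 2 * k + 3 - m else 1) := by
    intro k hk
    induction k with
    | zero =>
      rw [pow_zero]
      simp only [Equiv.Perm.coe_one, id_eq]
      rw [if_pos (by omega : (0:ℕ) < m / 2)]
    | succ n ih =>
      have hn : n < m := by omega
      have hval : ((σ ^ n) z).val < m := ((σ ^ n) z).isLt
      have h1 : (σ ^ (n + 1)) z = σ ((σ ^ n) z) := by
        rw [pow_succ']; rfl
      rw [h1, hστ, ih hn]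
      rw [hmod _ (by split_ifs <;> omega)]
      split_ifs <;> omega
  have reach : ∀ y : Fin m, ∃ k, k < m ∧ ((σ ^ k) z).val = y.val := by
    intro y
    have hy : y.val < m := y.isLt
    refine ⟨if y.val % 2 = 0 then y.val / 2 else if y.val = 1 then m - 1
      else (y.val + m - 3) / 2, by split_ifs <;> omega, ?_⟩
    rw [orbit _ (by split_ifs <;> omega)]
    split_ifs <;> omega
  have hfix : ∀ x : Fin m, σ x ≠ x := by
    intro x hx
    have := hστ x
    rw [hx] at this
    rw [hmod _ (by split_ifs <;> omega)] at this
    have hxv : x.val < m := x.isLt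
    split_ifs at this <;> omega
  constructor
  · refine ⟨z, hfix z, ?_⟩
    intro y _
    obtain ⟨k, hk, hky⟩ := reach y
    exact ⟨(k : ℤ), by rw [zpow_natCast]; exact Fin.ext hky⟩
  · rw [Finset.eq_univ_iff_forall]
    intro x
    rw [Equiv.Perm.mem_support]
    exact hfix x
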